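/- Let p be a prime and f : ℤ/pℤ → ℂ a function that is not identically zero. Then |supp f| + |supp f̂| ≥ p + 1, where f̂ is the (discrete) Fourier transform of f. -/
import Mathlib

open Polynomial Finset Equiv

-- base lemmas
-- lower bound on sum of distinct naturals
lemma sum_range_card_le_aux (n : ℕ) : ∀ s : Finset ℕ, s.card = n → ∑ j ∈ range n, j ≤ ∑ x ∈ s, x := by
  induction n with
  | zero => intro s _; simp
  | succ n ih =>
    intro s hn
    have hs : s.Nonempty := by
      rw [← Finset.card_pos, hn]; omega
    set M := s.max' hs with hM
    have hMs : M ∈ s := s.max'_mem hs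
    have hsub : s ⊆ range (M + 1) := by
      intro x hx
      simp only [mem_range]
      exact Nat.lt_succ_of_le (s.le_max' x hx)
    have hcard : s.card ≤ M + 1 := by
      simpa using Finset.card_le_card hsub
    have herase : (s.erase M).card = n := by
      rw [Finset.card_erase_of_mem hMs, hn]; omega
    have hsum : ∑ x ∈ s, x = M + ∑ x ∈ s.erase M, x :=
      (Finset.add_sum_erase s id hMs).symm
    have := ih (s.erase M) herase
    rw [Finset.sum_range_succ, hsum]
    omega

lemma sum_range_card_le (s : Finset ℕ) : ∑ j ∈ range s.card, j ≤ ∑ x ∈ s, x :=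
  sum_range_card_le_aux s.card s rfl

lemma sum_inj_ge {k : ℕ} (c : Fin k → ℕ) (hc : Function.Injective c) :
    ∑ j ∈ range k, j ≤ ∑ i, c i := by
  have himg : (Finset.univ.image c).card = k := by
    rw [Finset.card_image_of_injective _ hc, Finset.card_univ, Fintype.card_fin]
  have := sum_range_card_le (Finset.univ.image c)
  rw [himg] at this
  calc ∑ j ∈ range k, j ≤ ∑ x ∈ Finset.univ.image c, x := this
    _ = ∑ i, c i := by
        rw [Finset.sum_image]
        intro i _ j _ h
        exact hc h

-- equality case: values < k
lemma lt_of_inj_sum_eq {k : ℕ} (c : Fin k → ℕ) (hc : Function.Injective c)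
    (hsum : ∑ i, c i = ∑ j ∈ range k, j) (i0 : Fin k) : c i0 < k := by
  by_contra hge
  push_neg at hge
  set s := Finset.univ.image c with hs
  have hcard : s.card = k := by
    rw [hs, Finset.card_image_of_injective _ hc, Finset.card_univ, Fintype.card_fin]
  have hsum' : ∑ x ∈ s, x = ∑ j ∈ range k, j := by
    rw [hs, Finset.sum_image (fun i _ j _ h => hc h), hsum]
  have hne : s.Nonempty := ⟨c i0, Finset.mem_image_of_mem c (Finset.mem_univ i0)⟩
  set M := s.max' hne with hM
  have hMk : k ≤ M := le_trans hge (s.le_max' _ (Finset.mem_image_of_mem c (Finset.mem_univ i0)))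
  have hMs : M ∈ s := s.max'_mem hne
  have herase : (s.erase M).card = k - 1 := by rw [Finset.card_erase_of_mem hMs, hcard]
  have h1 : ∑ j ∈ range (k-1), j ≤ ∑ x ∈ s.erase M, x := by
    have := sum_range_card_le (s.erase M); rwa [herase] at this
  have h2 : ∑ x ∈ s, x = M + ∑ x ∈ s.erase M, x := (Finset.add_sum_erase s id hMs).symm
  have hk1 : 0 < k := i0.pos
  have h3 : ∑ j ∈ range k, j = ∑ j ∈ range (k-1), j + (k-1) := by
    conv_lhs => rw [show k = (k-1) + 1 by omega]
    rw [Finset.sum_range_succ]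
  omega

section core
variable {k : ℕ} (a b : Fin k → ℕ)

noncomputable def Psum (m : ℕ) : ℤ :=
  ∑ σ : Perm (Fin k), (Perm.sign σ : ℤ) * ((∑ i, a (σ i) * b i : ℕ) : ℤ) ^ m

noncomputable def Vd (a : Fin k → ℕ) : ℤ :=
  (Matrix.vandermonde (fun i : Fin k => (a i : ℤ))).det

-- the inner alternating sum as a determinant
lemma esum_eq_det (c : Fin k → ℕ) :
    ∑ σ : Perm (Fin k), (Perm.sign σ : ℤ) * ∏ i, ((a (σ i) : ℤ)) ^ c i
      = (Matrix.of fun x y : Fin k => ((a x : ℤ)) ^ c y).det := by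
  rw [Matrix.det_apply]
  refine Finset.sum_congr rfl fun σ _ => ?_
  rw [Units.smul_def, zsmul_eq_mul]
  rfl

lemma esum_eq_zero_of_not_inj (c : Fin k → ℕ) (hc : ¬ Function.Injective c) :
    ∑ σ : Perm (Fin k), (Perm.sign σ : ℤ) * ∏ i, ((a (σ i) : ℤ)) ^ c i = 0 := by
  rw [esum_eq_det]
  simp only [Function.Injective, not_forall] at hc
  obtain ⟨y1, y2, hcy, hne⟩ := hc
  exact Matrix.det_zero_of_column_eq hne (fun x => by simp [hcy])

lemma esum_perm (τ : Perm (Fin k)) :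
    ∑ σ : Perm (Fin k), (Perm.sign σ : ℤ) * ∏ i, ((a (σ i) : ℤ)) ^ ((τ i : ℕ))
      = (Perm.sign τ : ℤ) * Vd a := by
  rw [esum_eq_det]
  have : (Matrix.of fun x y : Fin k => ((a x : ℤ)) ^ ((τ y : ℕ)))
      = (Matrix.vandermonde (fun i : Fin k => (a i : ℤ))).submatrix id τ := rfl
  rw [this, Matrix.det_permute' τ, Vd]
  norm_cast

lemma esum_transpose :
    ∑ σ : Perm (Fin k), (Perm.sign σ : ℤ) * ∏ i, ((b i : ℤ)) ^ ((σ i : Fin k) : ℕ)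
      = Vd b := by
  have : Vd b = ((Matrix.vandermonde (fun i : Fin k => (b i : ℤ))).transpose).det := by
    rw [Matrix.det_transpose]; rfl
  rw [this, Matrix.det_apply]
  refine Finset.sum_congr rfl fun σ _ => ?_
  rw [Units.smul_def, zsmul_eq_mul]
  rfl

lemma psum_expand (m : ℕ) :
    Psum a b m = ∑ c ∈ piAntidiag (univ : Finset (Fin k)) m,
      (Nat.multinomial univ c : ℤ) * (∏ i, ((b i : ℤ)) ^ c i) *
        (∑ σ : Perm (Fin k), (Perm.sign σ : ℤ) * ∏ i, ((a (σ i) : ℤ)) ^ c i) := by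
  unfold Psum
  have hcast : ∀ σ : Perm (Fin k),
      ((∑ i, a (σ i) * b i : ℕ) : ℤ) = ∑ i, ((a (σ i) : ℤ)) * ((b i : ℤ)) := by
    intro σ; push_cast; rfl
  calc ∑ σ : Perm (Fin k), (Perm.sign σ : ℤ) * ((∑ i, a (σ i) * b i : ℕ) : ℤ) ^ m
      = ∑ σ : Perm (Fin k), ∑ c ∈ piAntidiag (univ : Finset (Fin k)) m,
          (Perm.sign σ : ℤ) * ((Nat.multinomial univ c : ℤ) *
            ∏ i, ((a (σ i) : ℤ) * (b i : ℤ)) ^ c i) := by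
        refine Finset.sum_congr rfl fun σ _ => ?_
        rw [hcast σ, Finset.sum_pow_eq_sum_piAntidiag, Finset.mul_sum]
    _ = _ := by
        rw [Finset.sum_comm]
        refine Finset.sum_congr rfl fun c _ => ?_
        rw [Finset.mul_sum]
        refine Finset.sum_congr rfl fun σ _ => ?_
        simp_rw [mul_pow]
        rw [Finset.prod_mul_distrib]
        ring

lemma psum_eq_zero {m : ℕ} (hm : m < ∑ j ∈ range k, j) : Psum a b m = 0 := by
  rw [psum_expand]
  refine Finset.sum_eq_zero fun c hc => ?_
  rw [mem_piAntidiag] at hc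
  have hninj : ¬ Function.Injective c := by
    intro hinj
    have h1 := sum_inj_ge c hinj
    have h2 : ∑ i, c i = m := hc.1
    omega
  rw [esum_eq_zero_of_not_inj a c hninj, mul_zero]

lemma psum_top :
    ((∏ i : Fin k, Nat.factorial (i : ℕ) : ℕ) : ℤ) * Psum a b (∑ j ∈ range k, j) =
      ((Nat.factorial (∑ j ∈ range k, j) : ℕ) : ℤ) * (Vd a * Vd b) := by
  classical
  set N := ∑ j ∈ range k, j with hN
  rw [psum_expand]
  set ι : Perm (Fin k) → (Fin k → ℕ) := fun τ i => (τ i : ℕ) with hι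
  have hιinj : Function.Injective ι := by
    intro τ1 τ2 h
    ext i
    have := congrFun h i
    simpa [hι] using congrArg (Fin.val) (Fin.val_injective this : τ1 i = τ2 i)
  have hNsum : ∀ τ : Perm (Fin k), ∑ i, ((τ i : Fin k) : ℕ) = N := by
    intro τ
    rw [hN, ← Fin.sum_univ_eq_sum_range (fun j => j) k]
    exact Equiv.sum_comp τ (fun i : Fin k => (i : ℕ))
  have hsub : Finset.image ι Finset.univ ⊆ piAntidiag (univ : Finset (Fin k)) N := by
    intro c hc
    rw [Finset.mem_image] at hc
    obtain ⟨τ, _, rfl⟩ := hc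
    rw [mem_piAntidiag]
    exact ⟨hNsum τ, fun i _ => Finset.mem_univ i⟩
  rw [← Finset.sum_subset hsub ?hz]
  case hz =>
    intro c hc hcim
    rw [mem_piAntidiag] at hc
    by_cases hinj : Function.Injective c
    · exfalso
      apply hcim
      have hsum' : ∑ i, c i = ∑ j ∈ range k, j := hc.1
      have hlt : ∀ i, c i < k := fun i => lt_of_inj_sum_eq c hinj hsum' i
      set e : Fin k → Fin k := fun i => ⟨c i, hlt i⟩ with he
      have einj : Function.Injective e := by
        intro i j h
        exact hinj (congrArg Fin.val h)
      set τ : Perm (Fin k) := Equiv.ofBijective e (Finite.injective_iff_bijective.mp einj)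
      refine Finset.mem_image.mpr ⟨τ, Finset.mem_univ τ, funext fun i => rfl⟩
    · rw [esum_eq_zero_of_not_inj a c hinj, mul_zero]
  rw [Finset.sum_image (fun τ1 _ τ2 _ h => hιinj h), Finset.mul_sum]
  have hFm : ∀ τ : Perm (Fin k),
      ((∏ i : Fin k, Nat.factorial (i : ℕ) : ℕ) : ℤ) * (Nat.multinomial univ (ι τ) : ℤ)
        = ((Nat.factorial N : ℕ) : ℤ) := by
    intro τ
    have hspec := Nat.multinomial_spec (s := univ) (f := ι τ)
    have hprod : ∏ i : Fin k, Nat.factorial (ι τ i) = ∏ i : Fin k, Nat.factorial (i : ℕ) :=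
      Equiv.prod_comp τ (fun i : Fin k => Nat.factorial (i : ℕ))
    have hsumτ : ∑ i ∈ univ, ι τ i = N := hNsum τ
    rw [hprod, hsumτ] at hspec
    exact_mod_cast congrArg (Nat.cast : ℕ → ℤ) hspec
  calc ∑ τ : Perm (Fin k), ((∏ i : Fin k, Nat.factorial (i : ℕ) : ℕ) : ℤ) *
        ((Nat.multinomial univ (ι τ) : ℤ) * (∏ i, ((b i : ℤ)) ^ (ι τ i)) *
          (∑ σ : Perm (Fin k), (Perm.sign σ : ℤ) * ∏ i, ((a (σ i) : ℤ)) ^ (ι τ i)))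
      = ∑ τ : Perm (Fin k), ((Nat.factorial N : ℕ) : ℤ) * Vd a *
          ((Perm.sign τ : ℤ) * ∏ i, ((b i : ℤ)) ^ ((τ i : Fin k) : ℕ)) := by
        refine Finset.sum_congr rfl fun τ _ => ?_
        have hesum : (∑ σ : Perm (Fin k), (Perm.sign σ : ℤ) * ∏ i, ((a (σ i) : ℤ)) ^ (ι τ i))
            = (Perm.sign τ : ℤ) * Vd a := esum_perm a τ
        rw [hesum]
        have hz := hFm τ
        linear_combination ((∏ i, ((b i : ℤ)) ^ ((τ i : Fin k) : ℕ)) * (Perm.sign τ : ℤ) * Vd a) * hz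
    _ = ((Nat.factorial N : ℕ) : ℤ) * (Vd a * Vd b) := by
        rw [← Finset.mul_sum, esum_transpose b]
        ring

noncomputable def Qdet : Polynomial ℤ :=
  (Matrix.of fun i j : Fin k => (X : Polynomial ℤ) ^ (a i * b j)).det

lemma Qdet_eq_sum : Qdet a b = ∑ σ : Perm (Fin k),
    (Perm.sign σ : ℤ) • (X : Polynomial ℤ) ^ (∑ i, a (σ i) * b i) := by
  rw [Qdet, Matrix.det_apply]
  refine Finset.sum_congr rfl fun σ _ => ?_
  rw [Units.smul_def]
  congr 1
  rw [← Finset.prod_pow_eq_pow_sum]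
  rfl

lemma taylor_coeff_Qdet (m : ℕ) :
    (taylor (1 : ℤ) (Qdet a b)).coeff m
      = ∑ σ : Perm (Fin k), (Perm.sign σ : ℤ) * (((∑ i, a (σ i) * b i).choose m : ℕ) : ℤ) := by
  rw [Qdet_eq_sum, map_sum, Polynomial.finset_sum_coeff]
  refine Finset.sum_congr rfl fun σ _ => ?_
  rw [map_zsmul, Polynomial.coeff_smul, taylor_apply, Polynomial.X_pow_comp]
  have : ((X : Polynomial ℤ) + C 1) = X + 1 := by simp
  rw [this, zsmul_eq_mul]
  congr 1
  have := Polynomial.coeff_X_add_one_pow ℤ (∑ i, a (σ i) * b i) m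
  rw [add_comm] at this ⊢
  exact this

lemma factorial_mul_taylor_coeff (m : ℕ) :
    ((Nat.factorial m : ℕ) : ℤ) * (taylor (1 : ℤ) (Qdet a b)).coeff m
      = ∑ t ∈ range (m + 1), (descPochhammer ℤ m).coeff t * Psum a b t := by
  rw [taylor_coeff_Qdet, Finset.mul_sum]
  have step : ∀ σ : Perm (Fin k),
      ((Nat.factorial m : ℕ) : ℤ) * ((Perm.sign σ : ℤ) * (((∑ i, a (σ i) * b i).choose m : ℕ) : ℤ))
        = (Perm.sign σ : ℤ) * ∑ t ∈ range (m + 1),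
            (descPochhammer ℤ m).coeff t * ((∑ i, a (σ i) * b i : ℕ) : ℤ) ^ t := by
    intro σ
    set n := ∑ i, a (σ i) * b i with hn
    have h1 : ((Nat.factorial m : ℕ) : ℤ) * ((n.choose m : ℕ) : ℤ)
        = (descPochhammer ℤ m).eval ((n : ℕ) : ℤ) := by
      rw [descPochhammer_eval_eq_descFactorial ℤ n m, Nat.descFactorial_eq_factorial_mul_choose]
      push_cast; ring
    have h2 : (descPochhammer ℤ m).eval ((n : ℕ) : ℤ)
        = ∑ t ∈ range (m + 1), (descPochhammer ℤ m).coeff t * ((n : ℕ) : ℤ) ^ t := by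
      apply Polynomial.eval_eq_sum_range' (x := ((n:ℕ):ℤ))
      rw [descPochhammer_natDegree]
      omega
    rw [← h2, ← h1]
    ring
  rw [Finset.sum_congr rfl (fun σ _ => step σ)]
  unfold Psum
  simp_rw [Finset.mul_sum]
  rw [Finset.sum_comm]
  refine Finset.sum_congr rfl fun t _ => ?_
  exact Finset.sum_congr rfl fun σ _ => by ring

lemma taylor_coeff_eq_zero {m : ℕ} (hm : m < ∑ j ∈ range k, j) :
    (taylor (1 : ℤ) (Qdet a b)).coeff m = 0 := by
  have h := factorial_mul_taylor_coeff a b m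
  have hz : ∑ t ∈ range (m + 1), (descPochhammer ℤ m).coeff t * Psum a b t = 0 := by
    refine Finset.sum_eq_zero fun t ht => ?_
    rw [Finset.mem_range] at ht
    rw [psum_eq_zero a b (by omega), mul_zero]
  rw [hz] at h
  have hfac : ((Nat.factorial m : ℕ) : ℤ) ≠ 0 := by
    exact_mod_cast Nat.factorial_ne_zero m
  exact (mul_eq_zero.mp h).resolve_left hfac

lemma taylor_coeff_top :
    ((∏ i : Fin k, Nat.factorial (i : ℕ) : ℕ) : ℤ) *
        (taylor (1 : ℤ) (Qdet a b)).coeff (∑ j ∈ range k, j) = Vd a * Vd b := by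
  set N := ∑ j ∈ range k, j with hN
  have h := factorial_mul_taylor_coeff a b N
  have hsplit : ∑ t ∈ range (N + 1), (descPochhammer ℤ N).coeff t * Psum a b t
      = Psum a b N := by
    rw [Finset.sum_range_succ]
    have hlead : (descPochhammer ℤ N).coeff N = 1 := by
      have hm := monic_descPochhammer ℤ N
      have := hm.leadingCoeff
      rwa [Polynomial.leadingCoeff, descPochhammer_natDegree] at this
    have hrest : ∑ t ∈ range N, (descPochhammer ℤ N).coeff t * Psum a b t = 0 := by
      refine Finset.sum_eq_zero fun t ht => ?_
      rw [Finset.mem_range] at ht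
      rw [psum_eq_zero a b ht, mul_zero]
    rw [hlead, hrest, one_mul, zero_add]
  rw [hsplit] at h
  have h2 := psum_top a b
  rw [← hN] at h2
  have hfac : ((Nat.factorial N : ℕ) : ℤ) ≠ 0 := by exact_mod_cast Nat.factorial_ne_zero N
  apply mul_left_cancel₀ hfac
  calc ((Nat.factorial N : ℕ) : ℤ) * (((∏ i : Fin k, Nat.factorial (i : ℕ) : ℕ) : ℤ) *
        (taylor (1 : ℤ) (Qdet a b)).coeff N)
      = ((∏ i : Fin k, Nat.factorial (i : ℕ) : ℕ) : ℤ) *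
          (((Nat.factorial N : ℕ) : ℤ) * (taylor (1 : ℤ) (Qdet a b)).coeff N) := by ring
    _ = ((∏ i : Fin k, Nat.factorial (i : ℕ) : ℕ) : ℤ) * Psum a b N := by rw [h]
    _ = ((Nat.factorial N : ℕ) : ℤ) * (Vd a * Vd b) := h2

lemma vd_not_dvd {p k : ℕ} (hp : p.Prime) (a : Fin k → ℕ)
    (ha : ∀ i, a i < p) (hainj : Function.Injective a) : ¬ ((p : ℤ) ∣ Vd a) := by
  intro hdvd
  rw [Vd, Matrix.det_vandermonde] at hdvd
  have hprime : Prime ((p : ℕ) : ℤ) := Nat.prime_iff_prime_int.mp hp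
  rw [Prime.dvd_finset_prod_iff hprime] at hdvd
  obtain ⟨i, _, hi⟩ := hdvd
  rw [Prime.dvd_finset_prod_iff hprime] at hi
  obtain ⟨j, hj, hij⟩ := hi
  rw [Finset.mem_Ioi] at hj
  have hne : ((a j : ℤ)) - (a i : ℤ) ≠ 0 := by
    intro h
    have : a j = a i := by exact_mod_cast sub_eq_zero.mp h
    exact (ne_of_gt hj) (hainj this)
  have hlt : |((a j : ℤ)) - (a i : ℤ)| < p := by
    have h1 := ha i; have h2 := ha j
    rw [abs_sub_lt_iff]
    constructor <;> omega
  have hle := Int.le_of_dvd (abs_pos.mpr hne) ((dvd_abs _ _).mpr hij)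
  omega

lemma cheb {p k : ℕ} (hp : p.Prime) (a b : Fin k → ℕ)
    (ha : ∀ i, a i < p) (hb : ∀ i, b i < p)
    (hainj : Function.Injective a) (hbinj : Function.Injective b) :
    (Matrix.of fun i j : Fin k =>
      Complex.exp (2 * Real.pi * Complex.I / p) ^ (a i * b j)).det ≠ 0 := by
  intro hdet
  haveI : Fact p.Prime := ⟨hp⟩
  set ω : ℂ := Complex.exp (2 * Real.pi * Complex.I / p) with hω
  have hprim : IsPrimitiveRoot ω p := Complex.isPrimitiveRoot_exp p hp.ne_zero
  set N := ∑ j ∈ range k, j with hN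
  -- aeval ω of Qdet vanishes
  have hinj : Function.Injective ⇑(Int.castRingHom ℚ) := fun x y h => by
    have h' : ((x : ℚ)) = (y : ℚ) := h
    exact_mod_cast h'
  have haev : Polynomial.aeval ω (Qdet a b) = 0 := by
    rw [Qdet, AlgHom.map_det (Polynomial.aeval ω)]
    convert hdet using 2
    ext i j
    simp [Matrix.map_apply]
  -- cyclotomic divides Qdet over ℤ
  have hdvdQ : cyclotomic p ℤ ∣ Qdet a b := by
    rw [← Polynomial.map_dvd_map (Int.castRingHom ℚ) hinj (cyclotomic.monic p ℤ), map_cyclotomic]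
    rw [cyclotomic_eq_minpoly_rat hprim hp.pos]
    apply minpoly.dvd
    rw [show (Int.castRingHom ℚ) = algebraMap ℤ ℚ from rfl, Polynomial.aeval_map_algebraMap]
    exact haev
  obtain ⟨Sq, hSq⟩ := hdvdQ
  -- taylor expansion: X^N divides taylor 1 Q
  set T := taylor (1 : ℤ) (Qdet a b) with hT
  have hXdvd : (X : Polynomial ℤ) ^ N ∣ T :=
    Polynomial.X_pow_dvd_iff.mpr fun d hd => taylor_coeff_eq_zero a b hd
  obtain ⟨T₂, hT₂⟩ := hXdvd
  have hQcomp : Qdet a b = T.comp (X - C 1) := by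
    rw [hT, taylor_apply, Polynomial.comp_assoc]
    simp
  have hfac : Qdet a b = (X - C 1) ^ N * T₂.comp (X - C 1) := by
    rw [hQcomp, hT₂, Polynomial.mul_comp, Polynomial.pow_comp, Polynomial.X_comp]
  -- coprime argument over ℚ
  have hcop : IsCoprime ((X : Polynomial ℚ) - C 1) (cyclotomic p ℚ) := by
    refine (Polynomial.irreducible_X_sub_C (1 : ℚ)).coprime_iff_not_dvd.mpr ?_
    rw [Polynomial.dvd_iff_isRoot]
    intro hroot
    have : Polynomial.eval (1 : ℚ) (cyclotomic p ℚ) = p := Polynomial.eval_one_cyclotomic_prime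
    rw [Polynomial.IsRoot.def] at hroot
    rw [hroot] at this
    exact_mod_cast (hp.ne_zero (by exact_mod_cast this.symm))
  have hdvdS : ((X : Polynomial ℤ) - C 1) ^ N ∣ Sq := by
    rw [← Polynomial.map_dvd_map (Int.castRingHom ℚ) hinj
      ((Polynomial.monic_X_sub_C (1 : ℤ)).pow N)]
    have hmp : (((X : Polynomial ℤ) - C 1) ^ N).map (Int.castRingHom ℚ)
        = ((X : Polynomial ℚ) - C 1) ^ N := by
      rw [Polynomial.map_pow, Polynomial.map_sub, Polynomial.map_X, Polynomial.map_C]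
      norm_num
    rw [hmp]
    refine (IsCoprime.pow_left hcop).dvd_of_dvd_mul_left ?_
    have h2 : cyclotomic p ℚ * Sq.map (Int.castRingHom ℚ)
        = ((X : Polynomial ℚ) - C 1) ^ N * (T₂.comp (X - C 1)).map (Int.castRingHom ℚ) := by
      rw [← map_cyclotomic p (Int.castRingHom ℚ), ← Polynomial.map_mul, ← hSq, hfac,
        Polynomial.map_mul, hmp]
    rw [h2]
    exact Dvd.intro _ rfl
  obtain ⟨S₂, hS₂⟩ := hdvdS
  -- cancel (X - 1)^N
  have hcancel : T₂.comp (X - C 1) = cyclotomic p ℤ * S₂ := by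
    have hne : ((X : Polynomial ℤ) - C 1) ^ N ≠ 0 :=
      pow_ne_zero _ (Polynomial.X_sub_C_ne_zero 1)
    apply mul_left_cancel₀ hne
    rw [← hfac, hSq, hS₂]
    ring
  -- evaluate at 1
  have heval : Polynomial.eval (1 : ℤ) (T₂.comp (X - C 1)) = T.coeff N := by
    rw [Polynomial.eval_comp]
    simp only [Polynomial.eval_sub, Polynomial.eval_X, Polynomial.eval_C, sub_self]
    rw [← Polynomial.coeff_zero_eq_eval_zero]
    rw [hT₂]
    have := Polynomial.coeff_X_pow_mul T₂ N 0
    rw [zero_add] at this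
    rw [this]
  have hpdvd : (p : ℤ) ∣ T.coeff N := by
    rw [← heval, hcancel]
    rw [Polynomial.eval_mul]
    have : Polynomial.eval (1 : ℤ) (cyclotomic p ℤ) = p := Polynomial.eval_one_cyclotomic_prime
    rw [this]
    exact Dvd.intro _ rfl
  -- contradiction with taylor_coeff_top
  have htop := taylor_coeff_top a b
  rw [← hN, ← hT] at htop
  have hpdvd2 : (p : ℤ) ∣ Vd a * Vd b := by
    rw [← htop]
    exact Dvd.dvd.mul_left hpdvd _
  have hprime : Prime ((p : ℕ) : ℤ) := Nat.prime_iff_prime_int.mp hp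
  rcases hprime.dvd_mul.mp hpdvd2 with h | h
  · exact vd_not_dvd hp a ha hainj h
  · exact vd_not_dvd hp b hb hbinj h

end core

theorem uncertainty (p : ℕ) (hp : p.Prime) [NeZero p] (f : ZMod p → ℂ) (hf : f ≠ 0) :
    p + 1 ≤ (Function.support f).ncard +
      (Function.support (fun k : ZMod p =>
        ∑ x : ZMod p, f x *
          Complex.exp (2 * Real.pi * Complex.I / p) ^ (k.val * x.val))).ncard := by
  classical
  set ω : ℂ := Complex.exp (2 * Real.pi * Complex.I / p) with hω
  set F : ZMod p → ℂ := fun k : ZMod p => ∑ x : ZMod p, f x * ω ^ (k.val * x.val) with hF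
  by_contra hcon
  push_neg at hcon
  set As : Finset (ZMod p) := Finset.univ.filter (fun x => f x ≠ 0) with hAs
  set Bs : Finset (ZMod p) := Finset.univ.filter (fun x => F x ≠ 0) with hBs
  have hAcoe : Function.support f = ↑As := by
    ext x; simp [hAs, Function.mem_support]
  have hBcoe : Function.support F = ↑Bs := by
    ext x; simp [hBs, Function.mem_support]
  rw [hAcoe, hBcoe, Set.ncard_coe_finset, Set.ncard_coe_finset] at hcon
  set kk := As.card with hkk
  have hk1 : 1 ≤ kk := by
    rcases Function.ne_iff.mp hf with ⟨x, hx⟩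
    have : x ∈ As := by simp [hAs]; exact hx
    exact Finset.card_pos.mpr ⟨x, this⟩
  have hcompl : kk ≤ Bsᶜ.card := by
    have hcc : Bsᶜ.card = Fintype.card (ZMod p) - Bs.card := Finset.card_compl Bs
    rw [ZMod.card] at hcc
    omega
  obtain ⟨Bt, hBtsub, hBtcard⟩ := Finset.exists_subset_card_eq hcompl
  -- enumerations
  set α : Fin kk → ZMod p := fun i => (As.equivFin.symm (Fin.cast hkk i) : ZMod p) with hα
  set β : Fin kk → ZMod p := fun j => (Bt.equivFin.symm (Fin.cast hBtcard.symm j) : ZMod p) with hβ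
  have hαinj : Function.Injective α := by
    intro i j h
    have := As.equivFin.symm.injective (Subtype.coe_injective h)
    simpa [Fin.ext_iff] using congrArg Fin.val this
  have hβinj : Function.Injective β := by
    intro i j h
    have := Bt.equivFin.symm.injective (Subtype.coe_injective h)
    simpa [Fin.ext_iff] using congrArg Fin.val this
  have hαmem : ∀ i, α i ∈ As := fun i => (As.equivFin.symm (Fin.cast hkk i)).2
  have hβmem : ∀ j, β j ∈ Bt := fun j => (Bt.equivFin.symm (Fin.cast hBtcard.symm j)).2
  set a : Fin kk → ℕ := fun i => (α i).val with ha'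
  set b : Fin kk → ℕ := fun j => (β j).val with hb'
  have ha : ∀ i, a i < p := fun i => ZMod.val_lt (α i)
  have hb : ∀ j, b j < p := fun j => ZMod.val_lt (β j)
  have hainj : Function.Injective a := fun i j h => hαinj (ZMod.val_injective p h)
  have hbinj : Function.Injective b := fun i j h => hβinj (ZMod.val_injective p h)
  -- the matrix
  set M : Matrix (Fin kk) (Fin kk) ℂ := Matrix.of fun j i => ω ^ (b j * a i) with hM
  have hdet : M.det ≠ 0 := cheb hp b a hb ha hbinj hainj
  set v : Fin kk → ℂ := fun i => f (α i) with hv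
  have hFβ : ∀ j, F (β j) = 0 := by
    intro j
    have hnotBs : β j ∉ Bs := Finset.mem_compl.mp (hBtsub (hβmem j))
    by_contra hne
    exact hnotBs (by simp [hBs]; exact hne)
  have hMv : M.mulVec v = 0 := by
    funext j
    have h1 : M.mulVec v j = ∑ i, ω ^ (b j * a i) * f (α i) := by
      simp [Matrix.mulVec, dotProduct, hM, hv]
    have h2 : F (β j) = ∑ x ∈ As, f x * ω ^ ((β j).val * x.val) := by
      rw [hF]
      exact (Finset.sum_subset (Finset.subset_univ As) (fun x _ hx => by
        have : f x = 0 := by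
          by_contra hfx
          exact hx (by simp [hAs]; exact hfx)
        rw [this, zero_mul])).symm
    have h3 : ∑ x ∈ As, f x * ω ^ ((β j).val * x.val)
        = ∑ i, f (α i) * ω ^ ((β j).val * (α i).val) := by
      rw [← Finset.sum_coe_sort As (fun x => f x * ω ^ ((β j).val * x.val))]
      rw [← Equiv.sum_comp (As.equivFin.symm) (fun s : ↥As => f ↑s * ω ^ ((β j).val * (↑s : ZMod p).val))]
      rfl
    have h4 : M.mulVec v j = F (β j) := by
      rw [h1, h2, h3]
      exact Finset.sum_congr rfl fun i _ => by rw [mul_comm]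
    rw [h4, hFβ j]
    rfl
  have hv0 : v = 0 := Matrix.eq_zero_of_mulVec_eq_zero hdet hMv
  have : f (α ⟨0, hk1⟩) ≠ 0 := by
    have := hαmem ⟨0, hk1⟩
    rw [hAs] at this
    exact (Finset.mem_filter.mp this).2
  exact this (by rw [show f (α ⟨0, hk1⟩) = v ⟨0, hk1⟩ from rfl, hv0]; rfl)
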